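/- Let f ∈ Fq[X] be a polynomial with f(0) ≠ 0, let d be a positive integer with gcd(d,q) = 1, and let M = { m : m divides d and f(X) = g(X^m) for some g ∈ Fq[X] }. Let t = max M. Then M is exactly the set of all positive divisors of t. -/
import Mathlib

open Polynomial

lemma comp_pow_iff {F : Type*} [Field F] (f : F[X]) {m : ℕ} (hm : 0 < m) :
    (∃ g : F[X], f = g.comp (X ^ m)) ↔ ∀ n, f.coeff n ≠ 0 → m ∣ n := by
  constructor
  · rintro ⟨g, rfl⟩ n hn
    rw [← expand_eq_comp_X_pow, coeff_expand hm] at hn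
    by_contra h
    simp [h] at hn
  · intro h
    refine ⟨f.contract m, ?_⟩
    rw [← expand_eq_comp_X_pow]
    ext n
    rw [coeff_expand hm, coeff_contract hm.ne']
    split_ifs with hdvd
    · rw [Nat.div_mul_cancel hdvd]
    · exact not_not.mp (not_imp_not.mpr (h n) hdvd)

/-- Let `f ∈ F_q[X]` with `f(0) ≠ 0`, `d ≥ 1` with `gcd(d,q) = 1`, and
`M = { m : m ∣ d, f(X) = g(X^m) for some g ∈ F_q[X] }`. Let `t = max M`. Then `M` is exactly
the set of all positive divisors of `t`. -/
theorem stmt11 {F : Type*} [Field F] [Fintype F]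
    (f : F[X]) (hf0 : f.coeff 0 ≠ 0)
    (d : ℕ) (hd : 0 < d) (hgcd : Nat.gcd d (Fintype.card F) = 1)
    (t : ℕ)
    (ht : IsGreatest {m : ℕ | m ∣ d ∧ ∃ g : F[X], f = g.comp (X ^ m)} t) :
    {m : ℕ | m ∣ d ∧ ∃ g : F[X], f = g.comp (X ^ m)} = {m : ℕ | 0 < m ∧ m ∣ t} := by
  obtain ⟨⟨htd, hgt⟩, htmax⟩ := ht
  have htpos : 0 < t := Nat.pos_of_dvd_of_pos htd hd
  ext m
  simp only [Set.mem_setOf_eq]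
  constructor
  · rintro ⟨hmd, hg⟩
    have hmpos : 0 < m := Nat.pos_of_dvd_of_pos hmd hd
    refine ⟨hmpos, ?_⟩
    -- lcm m t is in the set
    have hl : Nat.lcm m t ∈ {m : ℕ | m ∣ d ∧ ∃ g : F[X], f = g.comp (X ^ m)} := by
      refine ⟨Nat.lcm_dvd hmd htd, ?_⟩
      rw [comp_pow_iff f (Nat.pos_of_ne_zero (Nat.lcm_ne_zero hmpos.ne' htpos.ne'))]
      intro n hn
      exact Nat.lcm_dvd ((comp_pow_iff f hmpos).mp hg n hn)
        ((comp_pow_iff f htpos).mp hgt n hn)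
    have hle := htmax hl
    have heq : Nat.lcm m t = t :=
      le_antisymm hle (Nat.le_of_dvd (Nat.pos_of_ne_zero
        (Nat.lcm_ne_zero hmpos.ne' htpos.ne')) (Nat.dvd_lcm_right m t))
    exact heq ▸ Nat.dvd_lcm_left m t
  · rintro ⟨hmpos, hmt⟩
    refine ⟨hmt.trans htd, ?_⟩
    rw [comp_pow_iff f hmpos]
    intro n hn
    exact hmt.trans ((comp_pow_iff f htpos).mp hgt n hn)
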